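/- Let G = ⊕ₚ G(p) be a finite abelian group with g = (g_p)_p ∈ G, and let n ≥ 1 be an integer with prime decomposition n = ∏ₚ p^{n_p}. Then for each prime p, the p-primary component of (G ⊕ ℤ)/⟨(g, n)⟩ is isomorphic to (G(p) ⊕ ℤ)/⟨(g_p, p^{n_p})⟩. -/

import Mathlib

private lemma killsmul {A : Type*} [AddCommGroup A] {x : A} {d s : ℤ}
    (hd : d • x = 0) (hdvd : d ∣ s) : s • x = 0 := by
  obtain ⟨t, rfl⟩ := hdvd
  rw [mul_comm, mul_smul, hd, smul_zero]

private lemma fixsmul {A : Type*} [AddCommGroup A] {x : A} {d s : ℤ}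
    (hd : d • x = 0) (hdvd : d ∣ s - 1) : s • x = x := by
  have h2 : (s - 1) • x = 0 := killsmul hd hdvd
  have h3 := sub_smul s 1 x
  rw [h2, one_zsmul] at h3
  exact sub_eq_zero.mp h3.symm

private lemma ordpow {A : Type*} [AddCommGroup A] {p c : ℕ} (hp : p.Prime) (hc : c ≠ 0)
    {q : A} (hq : ∃ j, addOrderOf q = p ^ j) (hqc : (c : ℤ) • q = 0) :
    ((p : ℤ) ^ (c.factorization p)) • q = 0 := by
  obtain ⟨j, hj⟩ := hq
  have hdvd : addOrderOf q ∣ c := by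
    have := (addOrderOf_dvd_iff_zsmul_eq_zero (i := (c : ℤ))).mpr hqc
    exact_mod_cast this
  have hj' : j ≤ c.factorization p :=
    (Nat.Prime.pow_dvd_iff_le_factorization hp hc).mp (hj ▸ hdvd)
  apply (addOrderOf_dvd_iff_zsmul_eq_zero).mp
  rw [hj]
  exact_mod_cast pow_dvd_pow (p : ℤ) hj'

/-- For a finite abelian group `G`, `g ∈ G` with `p`-component `gp`, and `n ≥ 1` with
`p`-adic valuation `n_p`, the `p`-primary component of `(G ⊕ ℤ) ⧸ ⟨(g, n)⟩` is isomorphic to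
`(G(p) ⊕ ℤ) ⧸ ⟨(gp, p^{n_p})⟩`. -/
theorem stmt4 {p : ℕ} [Fact p.Prime] {G : Type*} [AddCommGroup G] [Finite G]
    (g : G) (gp : AddCommGroup.primaryComponent G p) (h : G)
    (hcop : (addOrderOf h).Coprime p) (hsum : g = (gp : G) + h)
    (n : ℕ) (hn : 1 ≤ n) :
    Nonempty ((AddCommGroup.primaryComponent ((G × ℤ) ⧸
        AddSubgroup.zmultiples ((g, (n : ℤ)) : G × ℤ)) p) ≃+
      (((AddCommGroup.primaryComponent G p) × ℤ) ⧸
        AddSubgroup.zmultiples ((gp, (p : ℤ) ^ (n.factorization p)) :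
          (AddCommGroup.primaryComponent G p) × ℤ))) := by
  classical
  have hp : p.Prime := Fact.out
  have hn0 : n ≠ 0 := by omega
  set k := n.factorization p with hkdef
  set m := n / p ^ k with hmdef
  have hnkm : p ^ k * m = n := Nat.ordProj_mul_ordCompl_eq_self n p
  have hpm : Nat.Coprime p m := Nat.coprime_ordCompl hp hn0
  set c := Nat.card G * n with hcdef
  have hcardG : Nat.card G ≠ 0 := Nat.card_pos.ne'
  have hc0 : c ≠ 0 := Nat.mul_ne_zero hcardG hn0
  set K := c.factorization p with hKdef
  set B := c / p ^ K with hBdef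
  have hcKB : p ^ K * B = c := Nat.ordProj_mul_ordCompl_eq_self c p
  have hpB : Nat.Coprime p B := Nat.coprime_ordCompl hp hc0
  have hndvdc : n ∣ c := Dvd.intro_left _ rfl
  have hkK : k ≤ K := by
    rw [hKdef]
    exact (Nat.Prime.pow_dvd_iff_le_factorization hp hc0).mp
      ((Nat.ordProj_dvd n p).trans hndvdc)
  set M := 2 * K + k with hMdef
  -- Bezout pair for e : e ≡ 0 mod B, e ≡ 1 mod p^M
  obtain ⟨α, β, hαβ⟩ : IsCoprime ((p : ℤ) ^ M) (B : ℤ) :=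
    (Nat.isCoprime_iff_coprime.mpr hpB).pow_left
  set e : ℤ := β * B with hedef
  have heB : (B : ℤ) ∣ e := dvd_mul_left _ _
  have he1 : (p : ℤ) ^ M ∣ e - 1 := ⟨-α, by linarith⟩
  -- Bezout pair for a : a * m ≡ 1 mod p^M
  obtain ⟨a, b', hab⟩ : IsCoprime ((m : ℤ)) ((p : ℤ) ^ M) :=
    (Nat.isCoprime_iff_coprime.mpr hpm.symm).pow_right
  have hma : (p : ℤ) ^ M ∣ a * m - 1 := ⟨-b', by linarith⟩
  -- exponent facts
  have hGc : ∀ x : G, (c : ℤ) • x = 0 := by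
    intro x
    have h1 : Nat.card G • x = 0 := card_nsmul_eq_zero'
    have h2 : c • x = 0 := by rw [hcdef, mul_comm, mul_nsmul, smul_comm, h1, nsmul_zero]
    rw [← natCast_zsmul x c] at h2
    exact_mod_cast h2
  have hordP : ∀ x : AddCommGroup.primaryComponent G p, ((p : ℤ) ^ K) • (x : G) = 0 := by
    intro x
    exact ordpow hp hc0 (AddCommGroup.mem_primaryComponent_iff_addOrderOf.mp x.2) (hGc _)
  have hKM : ((p : ℤ) ^ K) ∣ (p : ℤ) ^ M := pow_dvd_pow _ (by omega)
  have hgpK : ((p : ℤ) ^ K) • (gp : G) = 0 := hordP gp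
  have hhB : ((B : ℤ)) • h = 0 := by
    have h1 : addOrderOf h ∣ c := dvd_trans (addOrderOf_dvd_natCard h) ⟨n, rfl⟩
    have h2 : (addOrderOf h).Coprime (p ^ K) := Nat.Coprime.pow_right _ hcop
    have h3 : addOrderOf h ∣ B := by
      rw [← hcKB] at h1
      exact (Nat.Coprime.dvd_of_dvd_mul_left h2 h1)
    apply (addOrderOf_dvd_iff_zsmul_eq_zero).mp
    exact_mod_cast h3
  -- the projection π : G →+ primary component
  have hmemP : ∀ x : G, e • x ∈ AddCommGroup.primaryComponent G p := by
    intro x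
    refine AddCommGroup.mem_primaryComponent_iff_addOrderOf.mpr (exists_addOrderOf_eq_prime_pow_iff.mpr ⟨K, ?_⟩)
    have hz : ((p : ℤ) ^ K) • (e • x) = 0 := by
      rw [← mul_smul]
      refine killsmul (hGc x) ?_
      refine Dvd.dvd.trans ?_ (mul_dvd_mul_left ((p:ℤ)^K) heB)
      exact_mod_cast dvd_of_eq (by exact_mod_cast hcKB.symm)
    have hz' : ((p ^ K : ℕ) : ℤ) • (e • x) = 0 := by push_cast; exact hz
    rwa [natCast_zsmul] at hz'
  let π : G →+ AddCommGroup.primaryComponent G p :=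
    AddMonoidHom.codRestrict (zsmulAddGroupHom e) _ hmemP
  have hπ : ∀ x : G, ((π x : G)) = e • x := fun _ => rfl
  -- fixed points
  have hfixG : ∀ x : G, ((p : ℤ) ^ K) • x = 0 → e • x = x := by
    intro x hx
    have h2 : (e - 1) • x = 0 := killsmul hx (dvd_trans hKM he1)
    have h3 := sub_smul e 1 x
    rw [h2, one_zsmul] at h3
    exact sub_eq_zero.mp h3.symm
  have heh : e • h = 0 := killsmul hhB heB
  have hegp : e • (gp : G) = (gp : G) := hfixG _ hgpK
  have heg : e • g = (gp : G) := by rw [hsum, smul_add, hegp, heh, add_zero]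
  have hπg : π g = gp := Subtype.ext (by rw [hπ, heg])
  have hn' : ((p : ℤ)) ^ k * (m : ℤ) = (n : ℤ) := by exact_mod_cast congrArg (Nat.cast : ℕ → ℤ) hnkm
  have hc' : ((p : ℤ)) ^ K * (B : ℤ) = (c : ℤ) := by exact_mod_cast congrArg (Nat.cast : ℕ → ℤ) hcKB
  set N := AddSubgroup.zmultiples ((g, (n : ℤ)) : G × ℤ) with hNdef
  set NA := AddSubgroup.zmultiples
    ((gp, (p : ℤ) ^ k) : (AddCommGroup.primaryComponent G p) × ℤ) with hNAdef
  have hmemNA : ∀ (x : AddCommGroup.primaryComponent G p) (u : ℤ),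
      (x, u) ∈ NA ↔ ∃ s : ℤ, s • gp = x ∧ s * (p : ℤ) ^ k = u := by
    intro x u
    rw [hNAdef, AddSubgroup.mem_zmultiples_iff]
    constructor
    · rintro ⟨s, hs⟩
      exact ⟨s, by simpa [Prod.ext_iff, smul_eq_mul] using hs⟩
    · rintro ⟨s, h1, h2⟩
      exact ⟨s, by simp [Prod.ext_iff, smul_eq_mul, h1, h2]⟩
  have hmemN : ∀ (x : G) (u : ℤ),
      (x, u) ∈ N ↔ ∃ w : ℤ, w • g = x ∧ w * (n : ℤ) = u := by
    intro x u
    rw [hNdef, AddSubgroup.mem_zmultiples_iff]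
    constructor
    · rintro ⟨s, hs⟩
      exact ⟨s, by simpa [Prod.ext_iff, smul_eq_mul] using hs⟩
    · rintro ⟨s, h1, h2⟩
      exact ⟨s, by simp [Prod.ext_iff, smul_eq_mul, h1, h2]⟩
  let F0 : G × ℤ →+ (AddCommGroup.primaryComponent G p) × ℤ :=
    π.prodMap (zsmulAddGroupHom a)
  let Fbar := (QuotientAddGroup.mk' NA).comp F0
  have hFbar : ∀ y : G × ℤ,
      Fbar y = QuotientAddGroup.mk (π y.1, a * y.2) := fun y => rfl
  have hFgn : Fbar (g, (n : ℤ)) = 0 := by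
    rw [hFbar, QuotientAddGroup.eq_zero_iff, hmemNA]
    refine ⟨a * m, ?_, ?_⟩
    · rw [hπg]
      exact Subtype.ext (fixsmul hgpK (dvd_trans hKM hma))
    · rw [mul_assoc, mul_comm ((m : ℤ)) _, ← mul_assoc, mul_assoc, hn']
  have hker : ∀ y ∈ N, Fbar y = 0 := by
    rintro y hy
    obtain ⟨s, rfl⟩ := AddSubgroup.mem_zmultiples_iff.mp hy
    rw [map_zsmul, hFgn, smul_zero]
  let F := QuotientAddGroup.lift N Fbar hker
  have hF : ∀ y : G × ℤ,
      F (QuotientAddGroup.mk y) = QuotientAddGroup.mk (π y.1, a * y.2) := fun y => rfl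
  have hcard : ∀ x : G, ((Nat.card G : ℤ)) • x = 0 := by
    intro x
    have h1 : Nat.card G • x = 0 := card_nsmul_eq_zero'
    rw [← natCast_zsmul x (Nat.card G)] at h1
    exact h1
  have hQc : ∀ q : (G × ℤ) ⧸ N, (c : ℤ) • q = 0 := by
    intro q
    induction q using QuotientAddGroup.induction_on with
    | H y =>
      rw [← QuotientAddGroup.mk'_apply, ← map_zsmul, QuotientAddGroup.mk'_apply,
        QuotientAddGroup.eq_zero_iff]
      obtain ⟨x, u⟩ := y
      have : ((c : ℤ) • ((x, u) : G × ℤ)) = ((0 : G), (c : ℤ) * u) := by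
        simp [Prod.ext_iff, smul_eq_mul, hGc x]
      rw [this, hmemN]
      refine ⟨(Nat.card G : ℤ) * u, ?_, ?_⟩
      · rw [mul_comm, mul_smul]
        rw [hcard g, smul_zero]
      · push_cast [hcdef]
        ring
  -- the homomorphism restricted to the primary component
  refine ⟨AddEquiv.ofBijective
    (F.comp (AddSubgroup.subtype (AddCommGroup.primaryComponent ((G × ℤ) ⧸ N) p))) ⟨?_, ?_⟩⟩
  · -- injectivity
    rw [injective_iff_map_eq_zero]
    rintro ⟨q, hq⟩ hFq
    refine Subtype.ext ?_
    have hFq' : F q = 0 := hFq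
    have pKq : ((p : ℤ) ^ K) • q = 0 := ordpow hp hc0 (AddCommGroup.mem_primaryComponent_iff_addOrderOf.mp hq) (hQc q)
    show q = 0
    obtain ⟨⟨x, u⟩, rfl⟩ := QuotientAddGroup.mk_surjective q
    rw [← QuotientAddGroup.mk'_apply, ← map_zsmul, QuotientAddGroup.mk'_apply,
      QuotientAddGroup.eq_zero_iff] at pKq
    have hsm : ((p : ℤ) ^ K • ((x, u) : G × ℤ)) = ((p:ℤ)^K • x, (p:ℤ)^K * u) := by
      simp [Prod.ext_iff, smul_eq_mul]
    rw [hsm, hmemN] at pKq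
    obtain ⟨r, hr1, hr2⟩ := pKq
    rw [hF, QuotientAddGroup.eq_zero_iff, hmemNA] at hFq'
    obtain ⟨s', hs1, hs2⟩ := hFq'
    -- arithmetic
    have hpMK : ((p:ℤ)^K) ∣ (p:ℤ)^(M-K) := pow_dvd_pow _ (by omega)
    have hsplit : ((p:ℤ))^M = (p:ℤ)^K * (p:ℤ)^(M-K) := by
      rw [← pow_add]; congr 1; omega
    have hpne : (p:ℤ) ≠ 0 := by exact_mod_cast hp.ne_zero
    have hp0 : ((p:ℤ)) ^ k ≠ 0 := pow_ne_zero _ hpne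
    have hpK0 : ((p:ℤ)) ^ K ≠ 0 := pow_ne_zero _ hpne
    have key : (s' * (p:ℤ)^K) * (p:ℤ)^k = (r - b' * (p:ℤ)^M * r) * (p:ℤ)^k := by
      linear_combination ((p:ℤ)^K) * hs2 - a * hr2 - a * r * hn' + r * (p:ℤ)^k * hab
    have key2 : s' * (p:ℤ)^K = r - b' * (p:ℤ)^M * r := mul_right_cancel₀ hp0 key
    set w : ℤ := s' + b' * (p:ℤ)^(M-K) * r with hwdef
    have hrw : r = (p:ℤ)^K * w := by
      rw [hwdef]; linear_combination (-1 : ℤ) * key2 + b' * r * hsplit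
    have hu : u = w * (n:ℤ) := by
      have h4 : (p:ℤ)^K * u = (p:ℤ)^K * (w * (n:ℤ)) := by
        linear_combination -hr2 + (n:ℤ) * hrw
      exact mul_left_cancel₀ hpK0 h4
    have hδ : ((p:ℤ)^K) • (x - w • g) = 0 := by
      rw [smul_sub, smul_smul, ← hrw, hr1, sub_self]
    have hδfix : e • (x - w • g) = x - w • g := hfixG _ hδ
    have hex : e • x = s' • (gp : G) := by
      rw [← hπ x, ← hs1]
      simp
    have hfinal : x - w • g = (s' - w) • (gp : G) := by
      calc x - w • g = e • (x - w • g) := hδfix.symm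
        _ = e • x - w • (e • g) := by rw [smul_sub, smul_comm e w g]
        _ = s' • (gp : G) - w • (gp : G) := by rw [hex, heg]
        _ = (s' - w) • (gp : G) := (sub_smul _ _ _).symm
    have hsw : s' - w = -(b' * (p:ℤ)^(M-K) * r) := by rw [hwdef]; ring
    have hzero : (s' - w) • (gp : G) = 0 := by
      refine killsmul hgpK ?_
      rw [hsw]
      exact dvd_neg.mpr ((hpMK.mul_left b').mul_right r)
    rw [QuotientAddGroup.eq_zero_iff, hmemN]
    refine ⟨w, ?_, hu.symm⟩
    have h7 : x - w • g = 0 := by rw [hfinal, hzero]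
    exact (sub_eq_zero.mp h7).symm
  · intro α
    induction α using QuotientAddGroup.induction_on with
    | H y =>
      obtain ⟨x, u⟩ := y
      have hexx : e • ((x : G)) = (x : G) := hfixG _ (hordP x)
      obtain ⟨t, ht⟩ : ((p:ℤ))^M ∣ a * e * (m:ℤ) - 1 := by
        have h5 : a * e * (m:ℤ) - 1 = (e - 1) + e * (a * (m:ℤ) - 1) := by ring
        rw [h5]
        exact dvd_add he1 (hma.mul_left e)
      have hmemq : QuotientAddGroup.mk (((e • (x:G), e * (u * (m:ℤ)))) : G × ℤ)
          ∈ AddCommGroup.primaryComponent ((G × ℤ) ⧸ N) p := by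
        refine AddCommGroup.mem_primaryComponent_iff_addOrderOf.mpr (exists_addOrderOf_eq_prime_pow_iff.mpr ⟨K, ?_⟩)
        have hz : ((p:ℤ)^K) • (QuotientAddGroup.mk (((e • (x:G), e * (u * (m:ℤ)))) : G × ℤ)
            : (G × ℤ) ⧸ N) = 0 := by
          have h6 : (((e • (x:G), e * (u * (m:ℤ)))) : G × ℤ)
              = e • ((((x:G), u * (m:ℤ))) : G × ℤ) := by
            simp [Prod.ext_iff, smul_eq_mul]
          rw [h6, ← QuotientAddGroup.mk'_apply, map_zsmul, smul_smul]
          refine killsmul (hQc _) ?_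
          rw [← hc']
          exact mul_dvd_mul_left _ heB
        have hz' : ((p ^ K : ℕ) : ℤ) • (QuotientAddGroup.mk (((e • (x:G), e * (u * (m:ℤ)))) : G × ℤ)
            : (G × ℤ) ⧸ N) = 0 := by push_cast; exact hz
        rwa [natCast_zsmul] at hz'
      refine ⟨⟨_, hmemq⟩, ?_⟩
      show F (QuotientAddGroup.mk (((e • (x:G), e * (u * (m:ℤ)))) : G × ℤ))
        = QuotientAddGroup.mk ((x, u) : (AddCommGroup.primaryComponent G p) × ℤ)
      rw [hF]
      show (QuotientAddGroup.mk (π (e • (x:G)), a * (e * (u * (m:ℤ))))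
        : ((AddCommGroup.primaryComponent G p) × ℤ) ⧸ NA) = QuotientAddGroup.mk (x, u)
      have hπx : π (e • (x:G)) = x := Subtype.ext (by rw [hπ, hexx, hexx])
      rw [← QuotientAddGroup.mk'_apply, ← QuotientAddGroup.mk'_apply, ← sub_eq_zero, ← map_sub,
        QuotientAddGroup.mk'_apply, QuotientAddGroup.eq_zero_iff, Prod.mk_sub_mk, hmemNA]
      have hsplit2 : ((p:ℤ))^M = (p:ℤ)^(M-k) * (p:ℤ)^k := by
        rw [← pow_add]; congr 1; omega
      refine ⟨u * t * (p:ℤ)^(M-k), ?_, ?_⟩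
      · rw [hπx, sub_self]
        refine Subtype.ext ?_
        rw [AddSubgroupClass.coe_zsmul]
        show _ = (0 : G)
        refine killsmul hgpK ?_
        exact ((pow_dvd_pow (p:ℤ) (by omega : K ≤ M - k)).mul_left _)
      · linear_combination -u * ht - u * t * hsplit2
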